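/- Let p be an odd prime, G = ℤ/pℤ, and let s₁,…,s_m be integers, pairwise incongruent mod p and all nonzero mod p, with 1 ≤ m ≤ p−1. Let L := {a ∈ ℤ^m : s₁a₁ + ⋯ + s_m a_m ≡ 0 (mod p)}. Then L contains no point of L¹-norm 1, and any linearly independent subset of L consisting of points of L¹-norm at most 2 has cardinality at most ⌊m/2⌋. -/

import Mathlib

open Finset

-- a point with a single nonzero coordinate of abs ≤ 2 cannot be in the lattice
lemma aux18single (p : ℕ) (hp : p.Prime) (hodd : Odd p) {m : ℕ} (s : Fin m → ℤ)
    (hs0 : ∀ i, ¬ (p : ℤ) ∣ s i)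
    (a : Fin m → ℤ) (hdvd : (p : ℤ) ∣ ∑ i, s i * a i)
    (x : Fin m) (hx : a x ≠ 0) (habs : (a x).natAbs ≤ 2)
    (hzero : ∀ k, k ≠ x → a k = 0) : False := by
  have hp3 : 3 ≤ p := by
    have h2 := hp.two_le
    rcases hodd with ⟨k, hk⟩
    omega
  have hsum : ∑ i, s i * a i = s x * a x := by
    refine Finset.sum_eq_single x (fun b _ hb => by rw [hzero b hb, mul_zero]) ?_
    exact fun h => absurd (mem_univ x) h
  rw [hsum] at hdvd
  have hnat : p ∣ (s x).natAbs * (a x).natAbs := by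
    rw [← Int.natAbs_mul]
    exact Int.natCast_dvd.mp hdvd
  rcases (Nat.Prime.dvd_mul hp).mp hnat with h2 | h2
  · exact hs0 x (Int.natCast_dvd.mpr h2)
  · have h4 : 1 ≤ (a x).natAbs := Int.natAbs_pos.mpr hx
    have := Nat.le_of_dvd (by omega) h2
    omega

lemma aux18 (p : ℕ) (hp : p.Prime) (hodd : Odd p) {m : ℕ} (s : Fin m → ℤ)
    (hs0 : ∀ i, ¬ (p : ℤ) ∣ s i)
    (hsdist : ∀ i j, i ≠ j → ¬ (p : ℤ) ∣ (s i - s j))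
    (a : Fin m → ℤ) (hdvd : (p : ℤ) ∣ ∑ i, s i * a i)
    (hle : ∑ i, (a i).natAbs ≤ 2) (x : Fin m) (hx : a x ≠ 0) :
    ∃ y, y ≠ x ∧ a y = a x ∧ (a x).natAbs = 1 ∧
      (∀ k, k ≠ x → k ≠ y → a k = 0) ∧ (p : ℤ) ∣ s x + s y := by
  by_cases hex : ∃ j, j ≠ x ∧ a j ≠ 0
  · obtain ⟨j, hjx, hj⟩ := hex
    have hxj : x ≠ j := hjx.symm
    have hpairle : (a x).natAbs + (a j).natAbs ≤ 2 := by
      have h := Finset.sum_le_sum_of_subset (f := fun i => (a i).natAbs)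
        (subset_univ ({x, j} : Finset (Fin m)))
      rw [Finset.sum_pair hxj] at h
      exact le_trans h hle
    have h1 : 1 ≤ (a x).natAbs := Int.natAbs_pos.mpr hx
    have h2 : 1 ≤ (a j).natAbs := Int.natAbs_pos.mpr hj
    have hax : (a x).natAbs = 1 := by omega
    have haj : (a j).natAbs = 1 := by omega
    have hrest : ∀ k, k ≠ x → k ≠ j → a k = 0 := by
      have hsplit : (∑ i ∈ Finset.univ \ ({x, j} : Finset (Fin m)), (a i).natAbs)
          + ∑ i ∈ ({x, j} : Finset (Fin m)), (a i).natAbs = ∑ i, (a i).natAbs :=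
        Finset.sum_sdiff (subset_univ _)
      rw [Finset.sum_pair hxj, hax, haj] at hsplit
      have hz : ∑ i ∈ Finset.univ \ ({x, j} : Finset (Fin m)), (a i).natAbs = 0 := by omega
      intro k hkx hkj
      have hk : k ∈ Finset.univ \ ({x, j} : Finset (Fin m)) := by simp [hkx, hkj]
      exact Int.natAbs_eq_zero.mp ((Finset.sum_eq_zero_iff.mp hz) k hk)
    have hsum : ∑ i, s i * a i = s x * a x + s j * a j := by
      rw [← Finset.sum_subset (subset_univ ({x, j} : Finset (Fin m)))
        (fun k _ hk => ?_), Finset.sum_pair hxj]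
      have hkx : k ≠ x := by rintro rfl; simp at hk
      have hkj : k ≠ j := by rintro rfl; simp at hk
      rw [hrest k hkx hkj, mul_zero]
    rw [hsum] at hdvd
    rcases (by omega : a x = 1 ∨ a x = -1) with hx1 | hx1 <;>
      rcases (by omega : a j = 1 ∨ a j = -1) with hj1 | hj1
    · refine ⟨j, hjx, by rw [hj1, hx1], hax, hrest, ?_⟩
      rw [hx1, hj1, show s x * 1 + s j * 1 = s x + s j by ring] at hdvd
      exact hdvd
    · rw [hx1, hj1, show s x * 1 + s j * -1 = s x - s j by ring] at hdvd
      exact absurd hdvd (hsdist x j hxj)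
    · rw [hx1, hj1, show s x * -1 + s j * 1 = s j - s x by ring] at hdvd
      exact absurd hdvd (hsdist j x hjx)
    · refine ⟨j, hjx, by rw [hj1, hx1], hax, hrest, ?_⟩
      rw [hx1, hj1, show s x * -1 + s j * -1 = -(s x + s j) by ring] at hdvd
      exact dvd_neg.mp hdvd
  · push_neg at hex
    have habs : (a x).natAbs ≤ 2 := by
      have h := Finset.single_le_sum (f := fun i => (a i).natAbs)
        (fun i _ => Nat.zero_le _) (mem_univ x)
      omega
    exact absurd (aux18single p hp hodd s hs0 a hdvd x hx habs hex) not_false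

/-- Let `p` be an odd prime and `s₁,…,s_m` integers that are nonzero and
pairwise incongruent mod `p`, with `1 ≤ m ≤ p − 1`. Then the lattice
`L = {a ∈ ℤᵐ : ∑ sᵢaᵢ ≡ 0 (mod p)}` contains no point of `L¹`-norm `1`, and any linearly
independent subset of `L` consisting of points of `L¹`-norm at most `2` has cardinality at
most `⌊m/2⌋`. -/
theorem stmt18 (p : ℕ) (hp : p.Prime) (hodd : Odd p) (m : ℕ) (hm1 : 1 ≤ m)
    (hmp : m ≤ p - 1) (s : Fin m → ℤ)
    (hs0 : ∀ i, ¬ (p : ℤ) ∣ s i)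
    (hsdist : ∀ i j, i ≠ j → ¬ (p : ℤ) ∣ (s i - s j)) :
    (∀ a : Fin m → ℤ, (p : ℤ) ∣ ∑ i, s i * a i → ∑ i, (a i).natAbs ≠ 1) ∧
    (∀ t : Finset (Fin m → ℤ),
      (∀ a ∈ t, (p : ℤ) ∣ ∑ i, s i * a i ∧ ∑ i, (a i).natAbs ≤ 2) →
      LinearIndependent ℤ (Subtype.val : {a : Fin m → ℤ // a ∈ t} → (Fin m → ℤ)) →
      t.card ≤ m / 2) := by
  constructor
  · intro a hdvd hsum
    have hex : ∃ x, a x ≠ 0 := by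
      by_contra h
      push_neg at h
      rw [Finset.sum_eq_zero (fun i _ => by rw [h i, Int.natAbs_zero])] at hsum
      exact one_ne_zero hsum.symm
    obtain ⟨x, hx⟩ := hex
    obtain ⟨y, hyx, hyval, hax, -, -⟩ :=
      aux18 p hp hodd s hs0 hsdist a hdvd (by omega) x hx
    have hpairle : (a x).natAbs + (a y).natAbs ≤ 1 := by
      have h := Finset.sum_le_sum_of_subset (f := fun i => (a i).natAbs)
        (subset_univ ({x, y} : Finset (Fin m)))
      rw [Finset.sum_pair hyx.symm] at h
      exact le_trans h (le_of_eq hsum)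
    rw [hyval] at hpairle
    omega
  · intro t ht hli
    classical
    set S : (Fin m → ℤ) → Finset (Fin m) :=
      fun a => Finset.univ.filter (fun i => a i ≠ 0) with hS
    have hne0 : ∀ a ∈ t, a ≠ 0 := fun a ha => hli.ne_zero ⟨a, ha⟩
    have hsupp : ∀ a ∈ t, ∀ x, a x ≠ 0 → ∃ y, y ≠ x ∧ (p : ℤ) ∣ s x + s y ∧
        S a = {x, y} ∧ (a x).natAbs = 1 ∧ (∀ k, a k ≠ 0 → a k = a x) := by
      intro a ha x hx
      obtain ⟨y, hyx, hyval, hax, hzero, hdvd⟩ :=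
        aux18 p hp hodd s hs0 hsdist a (ht a ha).1 (ht a ha).2 x hx
      refine ⟨y, hyx, hdvd, ?_, hax, ?_⟩
      · ext k
        simp only [hS, Finset.mem_filter, Finset.mem_univ, true_and, Finset.mem_insert,
          Finset.mem_singleton]
        constructor
        · intro hk
          by_contra hc
          push_neg at hc
          exact hk (hzero k hc.1 hc.2)
        · rintro (rfl | rfl)
          · exact hx
          · rw [hyval]; exact hx
      · intro k hk
        by_cases hkx : k = x
        · rw [hkx]
        · by_cases hky : k = y
          · rw [hky, hyval]
          · exact absurd (hzero k hkx hky) hk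
    have hinj : Set.InjOn S ↑t := by
      intro a ha b hb hab
      by_contra hne
      obtain ⟨x, hx⟩ := Function.ne_iff.mp (hne0 a ha)
      have hmem : ∀ k, (a k ≠ 0 ↔ b k ≠ 0) := by
        intro k
        constructor <;> intro h
        · have hk : k ∈ S a := by simp [hS, h]
          rw [hab] at hk; simpa [hS] using hk
        · have hk : k ∈ S b := by simp [hS, h]
          rw [← hab] at hk; simpa [hS] using hk
      have hxb : b x ≠ 0 := (hmem x).mp hx
      obtain ⟨y, hyx, -, hSa, haabs, haconst⟩ := hsupp a ha x hx
      obtain ⟨z, hzx, -, hSb, hbabs, hbconst⟩ := hsupp b hb x hxb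
      have habval : a x = b x ∨ a x = -b x := by omega
      have hcases : a = b ∨ a = fun k => -(b k) := by
        rcases habval with h | h
        · left; funext k
          by_cases hk : a k = 0
          · have hbk : b k = 0 := by
              by_contra hbk; exact ((hmem k).mpr hbk) hk
            rw [hk, hbk]
          · rw [haconst k hk, hbconst k ((hmem k).mp hk), h]
        · right; funext k
          by_cases hk : a k = 0
          · have hbk : b k = 0 := by
              by_contra hbk; exact ((hmem k).mpr hbk) hk
            rw [hk, hbk]; ring
          · rw [haconst k hk, hbconst k ((hmem k).mp hk), h]
      rcases hcases with h | h
      · exact hne h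
      · have hab0 : a + b = 0 := by
          funext k
          have : a k = -(b k) := congrFun h k
          simp [Pi.add_apply, this]
        have hsub : (⟨a, ha⟩ : {v // v ∈ t}) ≠ ⟨b, hb⟩ :=
          fun hc => hne (congrArg Subtype.val hc)
        have hz := linearIndependent_iff'.mp hli {⟨a, ha⟩, ⟨b, hb⟩} (fun _ => 1)
          (by rw [Finset.sum_pair hsub]; simpa using hab0) ⟨a, ha⟩
          (Finset.mem_insert_self _ _)
        exact one_ne_zero hz
    have hcardim : t.card = (t.image S).card := (Finset.card_image_of_injOn hinj).symm
    have hcard2 : ∀ e ∈ t.image S, (id e : Finset (Fin m)).card = 2 := by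
      intro e he
      obtain ⟨a, ha, rfl⟩ := Finset.mem_image.mp he
      obtain ⟨x, hx⟩ := Function.ne_iff.mp (hne0 a ha)
      obtain ⟨y, hyx, -, hSa, -, -⟩ := hsupp a ha x hx
      rw [id_eq, hSa]
      exact Finset.card_pair hyx.symm
    have hdisj : ∀ e ∈ t.image S, ∀ f ∈ t.image S, e ≠ f → Disjoint (id e) (id f) := by
      intro e he f hf hef
      rw [id_eq, id_eq, Finset.disjoint_left]
      intro x hxe hxf
      obtain ⟨a, ha, rfl⟩ := Finset.mem_image.mp he
      obtain ⟨b, hb, rfl⟩ := Finset.mem_image.mp hf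
      have hax : a x ≠ 0 := by simpa [hS] using hxe
      have hbx : b x ≠ 0 := by simpa [hS] using hxf
      obtain ⟨y, hyx, hdy, hSa, -, -⟩ := hsupp a ha x hax
      obtain ⟨z, hzx, hdz, hSb, -, -⟩ := hsupp b hb x hbx
      by_cases hyz : y = z
      · exact hef (by rw [hSa, hSb, hyz])
      · refine hsdist y z hyz ?_
        have hd := dvd_sub hdy hdz
        rwa [show (s x + s y) - (s x + s z) = s y - s z by ring] at hd
    have hbiU := Finset.card_biUnion hdisj
    have hsum2 : ∑ e ∈ t.image S, (id e : Finset (Fin m)).card = 2 * (t.image S).card := by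
      rw [Finset.sum_congr rfl hcard2, Finset.sum_const, smul_eq_mul, mul_comm]
    rw [hsum2] at hbiU
    have hle2 : ((t.image S).biUnion id).card ≤ m := by
      refine le_trans (Finset.card_le_univ _) ?_
      simp
    omega
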